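/- Let m, c₀, M > 0. Let 𝒦 be the set of pairs (a₀, a) where a₀ ∈ ℝ, a is a real symmetric 3×3 matrix, a₀ ≥ m, a₃₃ ≥ m, |a₀| + |a| ≤ M, and ηᵀ a η ≥ c₀|η|² for all η ∈ ℝ³; let S₊ = { ζ̃ = (γ̃, τ̃, ξ̃) ∈ ℝ × ℝ × ℝ² : γ̃ ≥ 0, γ̃² + τ̃² + |ξ̃|⁴ = 1 }. For (a₀,a,ζ̃) define the 2×2 complex matrix 𝒜(a₀,a,ζ̃) with rows (0,1) and ( (a₀/a₃₃)(γ̃+iτ̃) + Σ_{1≤i,j≤2}(a_{ij}/a₃₃) ξ̃_i ξ̃_j , −2i Σ_{k=1}^{2}(a_{k3}/a₃₃) ξ̃_k ). Then there exist κ > 0, an open set U containing 𝒦 × S₊, and an infinitely differentiable map 𝒮 : U → M₂(ℂ) taking Hermitian values on 𝒦 × S₊, such that for every (a₀,a,ζ̃) ∈ 𝒦 × S₊ and every X = (X₁,X₂) ∈ ℂ²: Re⟨ 𝒮(a₀,a,ζ̃) 𝒜(a₀,a,ζ̃) X , X ⟩ ≥ κ|X|² and ⟨ 𝒮(a₀,a,ζ̃)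 X , X ⟩ + |X₁|² ≥ κ|X|². -/

import Mathlib

/-- The parameter space: a pair `(a₀, a)` of a scalar and a (3×3)-matrix of coefficients,
together with a point `ζ̃ = (γ̃, τ̃, ξ̃)` of frequency space. -/
abbrev ParamSpace : Type :=
  (ℝ × (Fin 3 → Fin 3 → ℝ)) × (ℝ × ℝ × (Fin 2 → ℝ))

/-- The compact set `𝒦` of admissible coefficients: `a₀ ≥ m`, `a` symmetric, `a₃₃ ≥ m`,
`|a₀| + |a| ≤ M` (Frobenius norm) and `ηᵀ a η ≥ c₀ |η|²`. -/
def coeffSet (m c₀ M : ℝ) : Set (ℝ × (Fin 3 → Fin 3 → ℝ)) :=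
  {p | m ≤ p.1 ∧ m ≤ p.2 2 2 ∧ (∀ i j, p.2 i j = p.2 j i) ∧
    |p.1| + Real.sqrt (∑ i : Fin 3, ∑ j : Fin 3, (p.2 i j) ^ 2) ≤ M ∧
    ∀ η : Fin 3 → ℝ, c₀ * (∑ i : Fin 3, η i ^ 2)
      ≤ ∑ i : Fin 3, ∑ j : Fin 3, η i * p.2 i j * η j}

/-- The parabolic half unit sphere `S₊ = {(γ̃, τ̃, ξ̃) : γ̃ ≥ 0, γ̃² + τ̃² + |ξ̃|⁴ = 1}`. -/
def paraSphere : Set (ℝ × ℝ × (Fin 2 → ℝ)) :=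
  {ζ | 0 ≤ ζ.1 ∧ ζ.1 ^ 2 + ζ.2.1 ^ 2 + (∑ i : Fin 2, ζ.2.2 i ^ 2) ^ 2 = 1}

/-- The symbol `𝒜(a₀, a, ζ̃)` (10.21) of the first-order system: the 2×2 complex matrix
with rows `(0, 1)` and
`((a₀/a₃₃)(γ̃ + iτ̃) + Σ_{i,j≤2} (a_{ij}/a₃₃) ξ̃ᵢξ̃ⱼ , −2i Σ_{k≤2} (a_{k3}/a₃₃) ξ̃ₖ)`. -/
noncomputable def calA (p : ParamSpace) : Fin 2 → Fin 2 → ℂ := fun i j =>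
  if i = 0 then (if j = 0 then 0 else 1)
  else if j = 0 then
    ((p.1.1 / p.1.2 2 2 : ℝ) : ℂ) * ((p.2.1 : ℂ) + (p.2.2.1 : ℂ) * Complex.I)
      + ((∑ k : Fin 2, ∑ l : Fin 2,
            p.1.2 k.castSucc l.castSucc / p.1.2 2 2 * p.2.2.2 k * p.2.2.2 l : ℝ) : ℂ)
  else (-2) * Complex.I
    * ((∑ k : Fin 2, p.1.2 k.castSucc 2 / p.1.2 2 2 * p.2.2.2 k : ℝ) : ℂ)

namespace MicroSym
noncomputable section

def rr (p : ParamSpace) : ℝ := ∑ k : Fin 2, p.1.2 k.castSucc 2 / p.1.2 2 2 * p.2.2.2 k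

def Rb (p : ParamSpace) : ℝ :=
  p.1.1 / p.1.2 2 2 * p.2.1 +
    ∑ k : Fin 2, ∑ l : Fin 2, p.1.2 k.castSucc l.castSucc / p.1.2 2 2 * p.2.2.2 k * p.2.2.2 l

def Ib (p : ParamSpace) : ℝ := p.1.1 / p.1.2 2 2 * p.2.2.1

def Red (p : ParamSpace) : ℝ := Rb p - rr p ^ 2
def nd (p : ParamSpace) : ℝ := Real.sqrt (Red p ^ 2 + Ib p ^ 2)
def xf (p : ParamSpace) : ℝ := Real.sqrt ((nd p + Red p) / 2)
def yf (p : ParamSpace) : ℝ := Ib p / (2 * xf p)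
def mu (p : ParamSpace) : ℂ := (xf p : ℂ) + (yf p : ℂ) * Complex.I
def va (p : ParamSpace) : ℂ := mu p + (rr p : ℂ) * Complex.I
def vb (p : ParamSpace) : ℂ := mu p - (rr p : ℂ) * Complex.I

def Smat (β : ℝ) (p : ParamSpace) : Fin 2 → Fin 2 → ℂ := fun i j =>
  if i = 0 then
    (if j = 0 then starRingEnd ℂ (va p) * va p - (β : ℂ) * (starRingEnd ℂ (vb p) * vb p)
     else starRingEnd ℂ (va p) + (β : ℂ) * starRingEnd ℂ (vb p))
  else
    (if j = 0 then va p + (β : ℂ) * vb p else 1 - (β : ℂ))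

lemma calA00 (p : ParamSpace) : calA p 0 0 = 0 := by simp [calA]
lemma calA01 (p : ParamSpace) : calA p 0 1 = 1 := by simp [calA]
lemma calA11 (p : ParamSpace) : calA p 1 1 = (-2) * Complex.I * ((rr p : ℝ) : ℂ) := by
  simp [calA, rr]
lemma calA10 (p : ParamSpace) : calA p 1 0 = ((Rb p : ℝ) : ℂ) + ((Ib p : ℝ) : ℂ) * Complex.I := by
  simp only [calA, Rb, Ib, if_true, eq_self_iff_true]
  norm_num
  push_cast
  ring

lemma herm (β : ℝ) (p : ParamSpace) (i j : Fin 2) :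
    Smat β p i j = starRingEnd ℂ (Smat β p j i) := by
  fin_cases i <;> fin_cases j <;>
    simp [Smat, map_sub, map_add, map_mul, Complex.conj_conj, Complex.conj_ofReal] <;> ring

lemma sum1_eq (β : ℝ) (p : ParamSpace) (X : Fin 2 → ℂ)
    (hA10 : calA p 1 0 = mu p ^ 2 - (((rr p : ℝ) : ℂ) * Complex.I) ^ 2) :
    (∑ i : Fin 2, (∑ j : Fin 2, (∑ k : Fin 2, Smat β p i k * calA p k j) * X j)
        * starRingEnd ℂ (X i))
      = (mu p - (rr p : ℂ) * Complex.I)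
          * ((va p * X 0 + X 1) * starRingEnd ℂ (va p * X 0 + X 1))
        + (β : ℂ) * (mu p + (rr p : ℂ) * Complex.I)
          * ((vb p * X 0 - X 1) * starRingEnd ℂ (vb p * X 0 - X 1)) := by
  simp only [Fin.sum_univ_two, calA00, calA01, calA11, hA10, Smat, va, vb,
    if_true, if_false, map_add, map_sub, map_mul, Complex.conj_ofReal, Complex.conj_I,
    show (0 : Fin 2) = 0 by rfl, reduceIte, show (1 : Fin 2) ≠ 0 by decide]
  ring

lemma sum2_eq (β : ℝ) (p : ParamSpace) (X : Fin 2 → ℂ) :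
    (∑ i : Fin 2, (∑ j : Fin 2, Smat β p i j * X j) * starRingEnd ℂ (X i))
      = ((va p * X 0 + X 1) * starRingEnd ℂ (va p * X 0 + X 1))
        - (β : ℂ) * ((vb p * X 0 - X 1) * starRingEnd ℂ (vb p * X 0 - X 1)) := by
  simp only [Fin.sum_univ_two, Smat, va, vb, map_add, map_sub, map_mul,
    Complex.conj_ofReal, Complex.conj_I, reduceIte, show (1 : Fin 2) ≠ 0 by decide]
  ring

lemma term_bound {a d u mR MR : ℝ} (ha : |a| ≤ MR) (hu : |u| ≤ 1) (hm : 0 < mR)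
    (hd : mR ≤ d) : |a / d * u| ≤ MR / mR := by
  have hd2 : mR ≤ |d| := le_trans hd (le_abs_self _)
  have hM0 : 0 ≤ MR := le_trans (abs_nonneg _) ha
  calc |a / d * u| = |a| / |d| * |u| := by rw [abs_mul, abs_div]
    _ ≤ MR / mR * 1 := by gcongr
    _ = MR / mR := mul_one _

lemma schur_eq {x0 x1 A00 A01 A10 A11 A02 A12 A22 S3 : ℝ} (hS3 : S3 = A02 * x0 + A12 * x1)
    (h : A22 ≠ 0) :
    x0 * A00 * x0 + x0 * A01 * x1 + x0 * A02 * -(S3 / A22) +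
        (x1 * A10 * x0 + x1 * A11 * x1 + x1 * A12 * -(S3 / A22)) +
      (-(S3 / A22) * A02 * x0 + -(S3 / A22) * A12 * x1 + -(S3 / A22) * A22 * -(S3 / A22))
    = (A00 * x0 * x0 + A01 * x0 * x1 + A10 * x1 * x0 + A11 * x1 * x1) - S3 ^ 2 / A22 := by
  subst hS3; field_simp; ring

lemma red_eq {a0 γ Q S3 A22 : ℝ} (h : A22 ≠ 0) :
    (a0 * γ + Q) / A22 - (S3 / A22) ^ 2 = (a0 * γ + (Q - S3 ^ 2 / A22)) / A22 := by
  field_simp; ring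

set_option maxHeartbeats 1600000 in
lemma point_facts (m c₀ M : ℝ) (hm : 0 < m) (hc₀ : 0 < c₀) (hM : 0 < M)
    (p : ParamSpace) (hp : p ∈ coeffSet m c₀ M ×ˢ paraSphere) :
    m ≤ p.1.2 2 2 ∧ p.1.2 2 2 ≤ M ∧ 0 ≤ Red p ∧
    min m c₀ / (3 * M) ≤ nd p ∧ nd p ≤ 6 * (M / m) + 4 * (M / m) ^ 2 ∧
    rr p ^ 2 ≤ 4 * (M / m) ^ 2 := by
  obtain ⟨⟨ha0, ha33, hsym, hnorm, hpos⟩, hγ0, hsph⟩ := hp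
  set a0 := p.1.1 with ha0def
  set A := p.1.2 with hAdef
  set γ := p.2.1 with hγdef
  set τ := p.2.2.1 with hτdef
  set ξ := p.2.2.2 with hξdef
  have hsqnn : (0:ℝ) ≤ Real.sqrt (∑ i : Fin 3, ∑ j : Fin 3, (A i j) ^ 2) := Real.sqrt_nonneg _
  have ha0M : |a0| ≤ M := by linarith
  have hAij : ∀ i j, |A i j| ≤ M := by
    intro i j
    have h1 : (A i j) ^ 2 ≤ ∑ i : Fin 3, ∑ j : Fin 3, (A i j) ^ 2 := by
      have h2 : (A i j) ^ 2 ≤ ∑ j' : Fin 3, (A i j') ^ 2 :=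
        Finset.single_le_sum (f := fun j' => (A i j') ^ 2) (fun j' _ => by positivity)
          (Finset.mem_univ j)
      have h3 : (∑ j' : Fin 3, (A i j') ^ 2) ≤ ∑ i' : Fin 3, ∑ j' : Fin 3, (A i' j') ^ 2 :=
        Finset.single_le_sum (f := fun i' => ∑ j' : Fin 3, (A i' j') ^ 2)
          (fun i' _ => by positivity) (Finset.mem_univ i)
      linarith
    have h4 : |A i j| = Real.sqrt ((A i j) ^ 2) := (Real.sqrt_sq_eq_abs _).symm
    have h5 := Real.sqrt_le_sqrt h1
    rw [h4]
    linarith [abs_nonneg a0]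
  have ha33M : A 2 2 ≤ M := le_trans (le_abs_self _) (hAij 2 2)
  have ha33pos : (0:ℝ) < A 2 2 := lt_of_lt_of_le hm ha33
  set s := ∑ i : Fin 2, ξ i ^ 2 with hsdef
  have hs0 : 0 ≤ s := by positivity
  have hssq : s ^ 2 ≤ 1 := by linarith [sq_nonneg γ, sq_nonneg τ]
  have hs1 : s ≤ 1 := by linarith [sq_nonneg (s - 1)]
  have hγsq : γ ^ 2 ≤ 1 := by linarith [sq_nonneg τ, sq_nonneg s]
  have hγ1 : γ ≤ 1 := by linarith [sq_nonneg (γ - 1)]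
  have hτ1 : |τ| ≤ 1 := (sq_le_one_iff_abs_le_one τ).mp (by linarith [sq_nonneg γ, sq_nonneg s])
  have hξk : ∀ k : Fin 2, |ξ k| ≤ 1 := by
    intro k
    have h1 : ξ k ^ 2 ≤ s :=
      Finset.single_le_sum (f := fun k' => ξ k' ^ 2) (fun k' _ => by positivity)
        (Finset.mem_univ k)
    exact (sq_le_one_iff_abs_le_one (ξ k)).mp (le_trans h1 hs1)
  have hMm : 0 < M / m := by positivity
  -- rr bound
  have hrr_expand : rr p = A 0 2 / A 2 2 * ξ 0 + A 1 2 / A 2 2 * ξ 1 := by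
    simp [rr, Fin.sum_univ_two, ← hAdef, ← hξdef]
  have hrr_abs : |rr p| ≤ 2 * (M / m) := by
    rw [hrr_expand]
    calc |A 0 2 / A 2 2 * ξ 0 + A 1 2 / A 2 2 * ξ 1|
        ≤ |A 0 2 / A 2 2 * ξ 0| + |A 1 2 / A 2 2 * ξ 1| := abs_add_le _ _
      _ ≤ M / m + M / m := add_le_add (term_bound (hAij 0 2) (hξk 0) hm ha33)
          (term_bound (hAij 1 2) (hξk 1) hm ha33)
      _ = 2 * (M / m) := by ring
  have hrr2 : rr p ^ 2 ≤ 4 * (M / m) ^ 2 := by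
    have h1 : rr p ^ 2 ≤ (2 * (M / m)) ^ 2 := by
      rw [← sq_abs]
      exact pow_le_pow_left₀ (abs_nonneg _) hrr_abs 2
    calc rr p ^ 2 ≤ (2 * (M / m)) ^ 2 := h1
      _ = 4 * (M / m) ^ 2 := by ring
  -- Rb, Ib bounds
  have hterm2 : ∀ (i j : Fin 3) (k l : Fin 2), |A i j / A 2 2 * ξ k * ξ l| ≤ M / m := by
    intro i j k l
    rw [mul_assoc]
    refine term_bound (hAij i j) ?_ hm ha33
    rw [abs_mul]
    exact mul_le_one₀ (hξk k) (abs_nonneg _) (hξk l)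
  have hRb_abs : |Rb p| ≤ 5 * (M / m) := by
    have hRb_expand : Rb p = a0 / A 2 2 * γ +
        (A 0 0 / A 2 2 * ξ 0 * ξ 0 + A 0 1 / A 2 2 * ξ 0 * ξ 1 +
          (A 1 0 / A 2 2 * ξ 1 * ξ 0 + A 1 1 / A 2 2 * ξ 1 * ξ 1)) := by
      simp [Rb, Fin.sum_univ_two, ← hAdef, ← hξdef, ← ha0def, ← hγdef]
    have hγa : |γ| ≤ 1 := abs_le.mpr ⟨by linarith, hγ1⟩
    rw [hRb_expand]
    have t0 := abs_le.mp (term_bound ha0M hγa hm ha33)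
    have t1 := abs_le.mp (hterm2 0 0 0 0)
    have t2 := abs_le.mp (hterm2 0 1 0 1)
    have t3 := abs_le.mp (hterm2 1 0 1 0)
    have t4 := abs_le.mp (hterm2 1 1 1 1)
    rw [abs_le]
    constructor
    · linarith [t0.1, t1.1, t2.1, t3.1, t4.1]
    · linarith [t0.2, t1.2, t2.2, t3.2, t4.2]
  have hIb_abs : |Ib p| ≤ M / m := by
    have : Ib p = a0 / A 2 2 * τ := by simp [Ib, ← hAdef, ← ha0def, ← hτdef]
    rw [this]
    exact term_bound ha0M hτ1 hm ha33
  -- nd upper bound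
  have hRed_abs : |Red p| ≤ 5 * (M / m) + 4 * (M / m) ^ 2 := by
    have h1 : |Red p| ≤ |Rb p| + |rr p ^ 2| := abs_sub _ _
    have h2 : |rr p ^ 2| = rr p ^ 2 := abs_of_nonneg (sq_nonneg _)
    have h3 : rr p ^ 2 ≤ 4 * (M / m) ^ 2 := hrr2
    have h4 : 4 * (M / m) ^ 2 ≤ 4 * (M / m) ^ 2 := le_refl _
    linarith [h2 ▸ h1]
  have hnd_ub : nd p ≤ 6 * (M / m) + 4 * (M / m) ^ 2 := by
    have hC : (0:ℝ) ≤ 6 * (M / m) + 4 * (M / m) ^ 2 := by positivity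
    have e1 : Red p ^ 2 ≤ (5 * (M / m) + 4 * (M / m) ^ 2) ^ 2 := by
      rw [← sq_abs]
      exact pow_le_pow_left₀ (abs_nonneg _) hRed_abs 2
    have e2 : Ib p ^ 2 ≤ (M / m) ^ 2 := by
      rw [← sq_abs]
      exact pow_le_pow_left₀ (abs_nonneg _) hIb_abs 2
    have h1 : Red p ^ 2 + Ib p ^ 2 ≤ (6 * (M / m) + 4 * (M / m) ^ 2) ^ 2 := by
      have e3 : (5 * (M / m) + 4 * (M / m) ^ 2) ^ 2 + (M / m) ^ 2
          + (10 * (M / m) ^ 2 + 8 * (M / m) ^ 3) = (6 * (M / m) + 4 * (M / m) ^ 2) ^ 2 := by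
        ring
      have e4 : (0:ℝ) ≤ 10 * (M / m) ^ 2 + 8 * (M / m) ^ 3 := by positivity
      linarith
    calc nd p ≤ Real.sqrt ((6 * (M / m) + 4 * (M / m) ^ 2) ^ 2) := Real.sqrt_le_sqrt h1
      _ = 6 * (M / m) + 4 * (M / m) ^ 2 := Real.sqrt_sq hC
  -- Schur complement lower bound
  set S3 := A 0 2 * ξ 0 + A 1 2 * ξ 1 with hS3def
  set Q := A 0 0 * ξ 0 * ξ 0 + A 0 1 * ξ 0 * ξ 1 + A 1 0 * ξ 1 * ξ 0 + A 1 1 * ξ 1 * ξ 1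
    with hQdef
  have hrr_eq : rr p = S3 / A 2 2 := by
    rw [hrr_expand, hS3def]; field_simp
  have hRb_eq : Rb p = (a0 * γ + Q) / A 2 2 := by
    have hRb_expand : Rb p = a0 / A 2 2 * γ +
        (A 0 0 / A 2 2 * ξ 0 * ξ 0 + A 0 1 / A 2 2 * ξ 0 * ξ 1 +
          (A 1 0 / A 2 2 * ξ 1 * ξ 0 + A 1 1 / A 2 2 * ξ 1 * ξ 1)) := by
      simp [Rb, Fin.sum_univ_two, ← hAdef, ← hξdef, ← ha0def, ← hγdef]
    rw [hRb_expand, hQdef]; field_simp; ring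
  have hA22ne : A 2 2 ≠ 0 := ne_of_gt ha33pos
  have hkey := hpos ![ξ 0, ξ 1, -(S3 / A 2 2)]
  simp only [Fin.sum_univ_three, Matrix.cons_val_zero, Matrix.cons_val_one,
    Matrix.head_cons, Matrix.cons_val_two, Matrix.tail_cons] at hkey
  rw [hsym 2 0, hsym 2 1] at hkey
  have hQS : c₀ * (ξ 0 ^ 2 + ξ 1 ^ 2) ≤ Q - S3 ^ 2 / A 2 2 := by
    have h3 : 0 ≤ c₀ * (S3 / A 2 2) ^ 2 := by positivity
    have h4 : c₀ * (ξ 0 ^ 2 + ξ 1 ^ 2 + (-(S3 / A 2 2)) ^ 2)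
        = c₀ * (ξ 0 ^ 2 + ξ 1 ^ 2) + c₀ * (S3 / A 2 2) ^ 2 := by ring
    have e := schur_eq (x0 := ξ 0) (x1 := ξ 1) (A00 := A 0 0) (A01 := A 0 1) (A10 := A 1 0)
      (A11 := A 1 1) (A02 := A 0 2) (A12 := A 1 2) (A22 := A 2 2) (S3 := S3) hS3def hA22ne
    rw [h4, e, ← hQdef] at hkey
    linarith [hkey, h3]
  have hRed_eq : Red p = (a0 * γ + (Q - S3 ^ 2 / A 2 2)) / A 2 2 := by
    have h0 : Red p = Rb p - rr p ^ 2 := rfl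
    rw [h0, hRb_eq, hrr_eq]
    exact red_eq (γ := γ) hA22ne
  have hξ01s : ξ 0 ^ 2 + ξ 1 ^ 2 = s := by rw [hsdef, Fin.sum_univ_two]
  have hRed_lb : (m * γ + c₀ * s) / M ≤ Red p := by
    have hnum0 : 0 ≤ m * γ + c₀ * s :=
      add_nonneg (mul_nonneg hm.le hγ0) (mul_nonneg hc₀.le hs0)
    have hnum : m * γ + c₀ * s ≤ a0 * γ + (Q - S3 ^ 2 / A 2 2) := by
      have h5 := mul_le_mul_of_nonneg_right ha0 hγ0
      rw [← hξ01s]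
      linarith [hQS, h5]
    calc (m * γ + c₀ * s) / M ≤ (m * γ + c₀ * s) / A 2 2 :=
        div_le_div_of_nonneg_left hnum0 ha33pos ha33M
      _ ≤ (a0 * γ + (Q - S3 ^ 2 / A 2 2)) / A 2 2 := (div_le_div_iff_of_pos_right ha33pos).mpr hnum
      _ = Red p := hRed_eq.symm
  have hRed0 : 0 ≤ Red p :=
    le_trans (div_nonneg (add_nonneg (mul_nonneg hm.le hγ0) (mul_nonneg hc₀.le hs0)) hM.le)
      hRed_lb
  -- nd lower bound
  have hndRed : Red p ≤ nd p := by
    have h0 : Red p ^ 2 ≤ Red p ^ 2 + Ib p ^ 2 := by linarith [sq_nonneg (Ib p)]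
    have h1 : Real.sqrt (Red p ^ 2) ≤ nd p := Real.sqrt_le_sqrt h0
    rwa [Real.sqrt_sq hRed0] at h1
  have hndIb : |Ib p| ≤ nd p := by
    have h0 : Ib p ^ 2 ≤ Red p ^ 2 + Ib p ^ 2 := by linarith [sq_nonneg (Red p)]
    have h1 : Real.sqrt (Ib p ^ 2) ≤ nd p := Real.sqrt_le_sqrt h0
    rwa [Real.sqrt_sq_eq_abs] at h1
  have htri : 1 ≤ γ + |τ| + s := by
    have e1 : γ * γ ≤ γ * 1 := mul_le_mul_of_nonneg_left hγ1 hγ0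
    have e2 : s * s ≤ s * 1 := mul_le_mul_of_nonneg_left hs1 hs0
    have e3 : |τ| * |τ| ≤ |τ| * 1 := mul_le_mul_of_nonneg_left hτ1 (abs_nonneg τ)
    have e4 : τ ^ 2 = |τ| * |τ| := by rw [← sq_abs]; ring
    have e5 : γ ^ 2 = γ * γ := sq γ
    have e6 : s ^ 2 = s * s := sq s
    linarith [hsph]
  have hcase : 1/3 ≤ γ ∨ 1/3 ≤ |τ| ∨ 1/3 ≤ s := by
    by_contra hh
    push_neg at hh
    obtain ⟨h1, h2, h3⟩ := hh
    linarith
  have hminm : min m c₀ ≤ m := min_le_left _ _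
  have hminc : min m c₀ ≤ c₀ := min_le_right _ _
  have hmin0 : 0 < min m c₀ := lt_min hm hc₀
  have hnd_lb : min m c₀ / (3 * M) ≤ nd p := by
    have h3M : (0:ℝ) < 3 * M := by linarith
    rcases hcase with hg | ht | hs
    · refine le_trans ?_ hndRed
      refine le_trans ?_ hRed_lb
      rw [div_le_div_iff₀ h3M hM]
      have e1 : m * (1/3) ≤ m * γ := mul_le_mul_of_nonneg_left hg hm.le
      have e3 := mul_le_mul_of_nonneg_right e1 h3M.le
      have e2 : 0 ≤ c₀ * s := mul_nonneg hc₀.le hs0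
      have e4 := mul_le_mul_of_nonneg_right e2 h3M.le
      have e5 := mul_le_mul_of_nonneg_right hminm hM.le
      linarith [e3, e4, e5]
    · refine le_trans ?_ hndIb
      have hIb_eq : |Ib p| = a0 * |τ| / A 2 2 := by
        have h6 : Ib p = a0 * τ / A 2 2 := by
          have : Ib p = a0 / A 2 2 * τ := rfl
          rw [this]; ring
        rw [h6, abs_div, abs_mul, abs_of_pos (lt_of_lt_of_le hm ha0),
          abs_of_pos ha33pos]
      rw [hIb_eq, div_le_div_iff₀ h3M ha33pos]
      have e1 : min m c₀ * A 2 2 ≤ m * M :=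
        mul_le_mul hminm ha33M ha33pos.le hm.le
      have e2 : m * (1/3) ≤ a0 * |τ| :=
        mul_le_mul ha0 ht (by norm_num) (le_trans hm.le ha0)
      have e3 := mul_le_mul_of_nonneg_right e2 h3M.le
      linarith [e1, e3]
    · refine le_trans ?_ hndRed
      refine le_trans ?_ hRed_lb
      rw [div_le_div_iff₀ h3M hM]
      have e1 : c₀ * (1/3) ≤ c₀ * s := mul_le_mul_of_nonneg_left hs hc₀.le
      have e3 := mul_le_mul_of_nonneg_right e1 h3M.le
      have e2 : 0 ≤ m * γ := mul_nonneg hm.le hγ0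
      have e4 := mul_le_mul_of_nonneg_right e2 h3M.le
      have e5 := mul_le_mul_of_nonneg_right hminc hM.le
      linarith [e3, e4, e5]
  exact ⟨ha33, ha33M, hRed0, hnd_lb, hnd_ub, hrr2⟩

lemma normSq_add_le (u v : ℂ) :
    Complex.normSq (u + v) ≤ 2 * Complex.normSq u + 2 * Complex.normSq v := by
  simp only [Complex.normSq_apply, Complex.add_re, Complex.add_im]
  nlinarith [sq_nonneg (u.re - v.re), sq_nonneg (u.im - v.im)]

lemma normSq_lower (u v : ℂ) :
    Complex.normSq v / 2 - Complex.normSq u ≤ Complex.normSq (u + v) := by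
  have h := normSq_add_le (u + v) (-u)
  have e : (u + v) + (-u) = v := by ring
  rw [e, Complex.normSq_neg] at h
  linarith

lemma chain0 {κ c δ E n1 n2 q0 q1 : ℝ} (hE : 0 < E) (hc : 0 ≤ c)
    (hκ : κ ≤ c * (2 * δ) / E) (hb : 2 * δ * (q0 + q1) ≤ E * (n1 + n2))
    (hq : 0 ≤ q0 + q1) : κ * (q0 + q1) ≤ c * (n1 + n2) := by
  have h1 : κ * (q0 + q1) ≤ (c * (2 * δ) / E) * (q0 + q1) :=
    mul_le_mul_of_nonneg_right hκ hq
  have h2 : (c * (2 * δ) / E) * (q0 + q1) = (c / E) * (2 * δ * (q0 + q1)) := by ring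
  have h3 : (c / E) * (2 * δ * (q0 + q1)) ≤ (c / E) * (E * (n1 + n2)) :=
    mul_le_mul_of_nonneg_left hb (div_nonneg hc hE.le)
  have h4 : (c / E) * (E * (n1 + n2)) = c * (n1 + n2) := by field_simp
  linarith

lemma step1 {cm β x n1 n2 : ℝ} (hx : cm ≤ x) (hcm : 0 < cm) (hβ : 0 < β) (hβ1 : β ≤ 1)
    (hn1 : 0 ≤ n1) (hn2 : 0 ≤ n2) : cm * β * (n1 + n2) ≤ x * n1 + β * (x * n2) := by
  have t1 := mul_nonneg (sub_nonneg.mpr hx) hn1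
  have t2 := mul_nonneg (mul_nonneg hcm.le (sub_nonneg.mpr hβ1)) hn1
  have t3 := mul_nonneg (mul_nonneg hβ.le (sub_nonneg.mpr hx)) hn2
  nlinarith [t1, t2, t3]

lemma step2 {β B n1 n2 q0 : ℝ} (hB : 1 ≤ B) (hβ16 : β * (16 * B) = 1) (hβpos : 0 < β)
    (hf5 : n2 / 2 - n1 ≤ 4 * (B * q0)) (hn1 : 0 ≤ n1) (hn2 : 0 ≤ n2) (hq0 : 0 ≤ q0) :
    β * (n1 + n2) ≤ (n1 - β * n2) + q0 := by
  have h6 := mul_le_mul_of_nonneg_left hf5 (by positivity : (0:ℝ) ≤ 4 * β)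
  have h7 : 4 * β * (4 * (B * q0)) = q0 := by linear_combination q0 * hβ16
  have h8 : β * (16 * 1) ≤ β * (16 * B) := by
    apply mul_le_mul_of_nonneg_left _ hβpos.le
    linarith
  have h9 : 16 * β ≤ 1 := by linarith [h8, hβ16]
  have h10 := mul_le_mul_of_nonneg_right h9 hn1
  linarith [h6, h7, h10]
def Uset (m : ℝ) : Set ParamSpace := {p | m / 2 < p.1.2 2 2 ∧ 0 < nd p + Red p}

lemma isOpen_Uset (m : ℝ) (hm : 0 < m) : IsOpen (Uset m) := by
  have hS : IsOpen {p : ParamSpace | m / 2 < p.1.2 2 2} := by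
    have : Continuous (fun p : ParamSpace => p.1.2 2 2) := by fun_prop
    exact isOpen_lt continuous_const this
  have hcont : ContinuousOn (fun p => nd p + Red p) {p : ParamSpace | m / 2 < p.1.2 2 2} := by
    intro q hq
    apply ContinuousAt.continuousWithinAt
    have hqne : q.1.2 2 2 ≠ 0 := ne_of_gt (lt_trans (half_pos hm) hq)
    simp only [nd, Red, Rb, rr, Ib, Fin.sum_univ_two]
    fun_prop (disch := assumption)
  have : Uset m = {p : ParamSpace | m / 2 < p.1.2 2 2} ∩
      (fun p => nd p + Red p) ⁻¹' (Set.Ioi 0) := by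
    ext q; simp [Uset, Set.mem_setOf_eq, and_comm]
  rw [this]
  exact hcont.isOpen_inter_preimage hS isOpen_Ioi

lemma smat_smooth (m β : ℝ) (hm : 0 < m) :
    ContDiffOn ℝ (⊤ : ℕ∞) (fun p => Smat β p) (Uset m) := by
  intro p hp
  apply ContDiffAt.contDiffWithinAt
  obtain ⟨h33, hnr⟩ := hp
  have h33pos : 0 < p.1.2 2 2 := lt_trans (half_pos hm) h33
  have h33ne : p.1.2 2 2 ≠ 0 := ne_of_gt h33pos
  have crr : ContDiffAt ℝ (⊤:ℕ∞) rr p := by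
    unfold rr
    simp only [Fin.sum_univ_two]
    fun_prop (disch := assumption)
  have cRb : ContDiffAt ℝ (⊤:ℕ∞) Rb p := by
    unfold Rb
    simp only [Fin.sum_univ_two]
    fun_prop (disch := assumption)
  have cIb : ContDiffAt ℝ (⊤:ℕ∞) Ib p := by
    unfold Ib
    fun_prop (disch := assumption)
  have cRed : ContDiffAt ℝ (⊤:ℕ∞) Red p := cRb.sub (crr.pow 2)
  have harg : Red p ^ 2 + Ib p ^ 2 ≠ 0 := by
    intro h
    have h1 : Red p ^ 2 = 0 := by nlinarith [sq_nonneg (Red p), sq_nonneg (Ib p)]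
    have h2 : Red p = 0 := by
      have := sq_eq_zero_iff.mp h1
      exact this
    have h3 : nd p = 0 := by
      unfold nd
      rw [h, Real.sqrt_zero]
    rw [h2, h3] at hnr
    simp at hnr
  have cnd : ContDiffAt ℝ (⊤:ℕ∞) nd p :=
    (Real.contDiffAt_sqrt harg).comp p ((cRed.pow 2).add (cIb.pow 2))
  have hargx : (nd p + Red p) / 2 ≠ 0 := by positivity
  have cxf : ContDiffAt ℝ (⊤:ℕ∞) xf p :=
    (Real.contDiffAt_sqrt hargx).comp p ((cnd.add cRed).div_const 2)
  have hxpos : 0 < xf p := Real.sqrt_pos.mpr (by linarith)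
  have hxne : 2 * xf p ≠ 0 := by positivity
  have cyf : ContDiffAt ℝ (⊤:ℕ∞) yf p :=
    cIb.div (contDiffAt_const.mul cxf) hxne
  have cC : ∀ f : ParamSpace → ℝ, ContDiffAt ℝ (⊤:ℕ∞) f p →
      ContDiffAt ℝ (⊤:ℕ∞) (fun q => ((f q : ℝ) : ℂ)) p := fun f hf =>
    Complex.ofRealCLM.contDiff.contDiffAt.comp p hf
  rw [contDiffAt_pi]; intro i
  rw [contDiffAt_pi]; intro j
  have e00 : (fun q => Smat β q 0 0) = fun q =>
      ((xf q ^ 2 + (yf q + rr q) ^ 2 - β * (xf q ^ 2 + (yf q - rr q) ^ 2) : ℝ) : ℂ) := by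
    funext q
    simp only [Smat, reduceIte, va, vb, mu]
    simp only [map_add, map_sub, map_mul, Complex.conj_ofReal, Complex.conj_I]
    apply Complex.ext <;>
      simp [Complex.add_re, Complex.add_im, Complex.sub_re, Complex.sub_im, Complex.neg_re,
        Complex.neg_im, Complex.mul_re, Complex.mul_im, Complex.I_re, Complex.I_im,
        Complex.ofReal_re, Complex.ofReal_im, pow_two] <;> ring
  have e01 : (fun q => Smat β q 0 1) = fun q =>
      (((1 + β) * xf q : ℝ) : ℂ) - ((yf q + rr q + β * (yf q - rr q) : ℝ) : ℂ) * Complex.I := by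
    funext q
    simp only [Smat, reduceIte, va, vb, mu, show (1 : Fin 2) ≠ 0 by decide]
    simp only [map_add, map_sub, map_mul, Complex.conj_ofReal, Complex.conj_I]
    apply Complex.ext <;>
      simp [Complex.add_re, Complex.add_im, Complex.sub_re, Complex.sub_im, Complex.neg_re,
        Complex.neg_im, Complex.mul_re, Complex.mul_im, Complex.I_re, Complex.I_im,
        Complex.ofReal_re, Complex.ofReal_im, pow_two] <;> ring
  have e10 : (fun q => Smat β q 1 0) = fun q =>
      (((1 + β) * xf q : ℝ) : ℂ) + ((yf q + rr q + β * (yf q - rr q) : ℝ) : ℂ) * Complex.I := by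
    funext q
    simp only [Smat, reduceIte, va, vb, mu, show (1 : Fin 2) ≠ 0 by decide]
    apply Complex.ext <;>
      simp [Complex.add_re, Complex.add_im, Complex.sub_re, Complex.sub_im, Complex.neg_re,
        Complex.neg_im, Complex.mul_re, Complex.mul_im, Complex.I_re, Complex.I_im,
        Complex.ofReal_re, Complex.ofReal_im, pow_two] <;> ring
  have e11 : (fun q => Smat β q 1 1) = fun _ => ((1 - β : ℝ) : ℂ) := by
    funext q
    simp only [Smat, reduceIte, show (1 : Fin 2) ≠ 0 by decide]
    push_cast; ring
  fin_cases i <;> fin_cases j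
  · rw [show (⟨0, by norm_num⟩ : Fin 2) = 0 from rfl]
    rw [e00]
    exact cC _ (((cxf.pow 2).add ((cyf.add crr).pow 2)).sub
      (contDiffAt_const.mul ((cxf.pow 2).add ((cyf.sub crr).pow 2))))
  · rw [show (⟨0, by norm_num⟩ : Fin 2) = 0 from rfl, show (⟨1, by norm_num⟩ : Fin 2) = 1 from rfl]
    rw [e01]
    exact (cC _ (contDiffAt_const.mul cxf)).sub
      ((cC _ ((cyf.add crr).add (contDiffAt_const.mul (cyf.sub crr)))).mul contDiffAt_const)
  · rw [show (⟨1, by norm_num⟩ : Fin 2) = 1 from rfl, show (⟨0, by norm_num⟩ : Fin 2) = 0 from rfl]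
    rw [e10]
    exact (cC _ (contDiffAt_const.mul cxf)).add
      ((cC _ ((cyf.add crr).add (contDiffAt_const.mul (cyf.sub crr)))).mul contDiffAt_const)
  · rw [show (⟨1, by norm_num⟩ : Fin 2) = 1 from rfl]
    rw [e11]
    exact contDiffAt_const

end
end MicroSym
open MicroSym Complex in
set_option maxHeartbeats 1600000 in
/-- Lemma 10.5 of the paper: existence of a smooth microlocal symmetrizer `𝒮` on a
neighborhood of `𝒦 × S₊`, Hermitian on `𝒦 × S₊`, with `Re⟨𝒮𝒜X, X⟩ ≥ κ|X|²` and
`⟨𝒮X, X⟩ + |X₁|² ≥ κ|X|²`. -/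
theorem microlocal_symmetrizer (m c₀ M : ℝ) (hm : 0 < m) (hc₀ : 0 < c₀) (hM : 0 < M) :
    ∃ κ : ℝ, 0 < κ ∧
      ∃ U : Set ParamSpace, IsOpen U ∧ coeffSet m c₀ M ×ˢ paraSphere ⊆ U ∧
        ∃ 𝒮 : ParamSpace → Fin 2 → Fin 2 → ℂ,
          ContDiffOn ℝ (⊤ : ℕ∞) 𝒮 U ∧
          ∀ p ∈ coeffSet m c₀ M ×ˢ paraSphere,
            (∀ i j, 𝒮 p i j = starRingEnd ℂ (𝒮 p j i)) ∧
            (∀ X : Fin 2 → ℂ,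
              κ * (∑ i : Fin 2, Complex.normSq (X i))
                ≤ (∑ i : Fin 2,
                    (∑ j : Fin 2, (∑ k : Fin 2, 𝒮 p i k * calA p k j) * X j)
                      * starRingEnd ℂ (X i)).re) ∧
            (∀ X : Fin 2 → ℂ,
              κ * (∑ i : Fin 2, Complex.normSq (X i))
                ≤ (∑ i : Fin 2, (∑ j : Fin 2, 𝒮 p i j * X j) * starRingEnd ℂ (X i)).re
                  + Complex.normSq (X 0)) := by
  have hMm : 0 < M / m := div_pos hM hm
  set δ : ℝ := min m c₀ / (3 * M) with hδdef
  have hδ : 0 < δ := div_pos (lt_min hm hc₀) (by linarith)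
  set C₁ : ℝ := 6 * (M / m) + 4 * (M / m) ^ 2 with hC₁def
  have hC₁ : 0 < C₁ := by rw [hC₁def]; have := sq_nonneg (M / m); linarith
  set B : ℝ := C₁ + 1 with hBdef
  have hB1 : 1 ≤ B := by linarith
  have hBpos : 0 < B := by linarith
  set C₃ : ℝ := 2 * B + 8 * (M / m) ^ 2 with hC₃def
  have hC₃ : 0 < C₃ := by rw [hC₃def]; have := sq_nonneg (M / m); linarith
  set E : ℝ := 4 * δ + 1 + 2 * C₃ with hEdef
  have hE : 0 < E := by linarith
  set cm : ℝ := Real.sqrt (δ / 2) with hcmdef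
  have hcm : 0 < cm := Real.sqrt_pos.mpr (by linarith)
  set β : ℝ := 1 / (16 * B) with hβdef
  have hβpos : 0 < β := by rw [hβdef]; positivity
  have hβ16 : β * (16 * B) = 1 := by rw [hβdef]; field_simp
  have hβ1 : β ≤ 1 := by rw [hβdef, div_le_one (by linarith)]; linarith
  set κ : ℝ := min cm 1 * β * (2 * δ) / E with hκdef
  have hmin : 0 < min cm 1 := lt_min hcm one_pos
  have hκpos : 0 < κ :=
    div_pos (mul_pos (mul_pos hmin hβpos) (by linarith)) hE
  refine ⟨κ, hκpos, Uset m, isOpen_Uset m hm, ?_, fun p => Smat β p, smat_smooth m β hm, ?_⟩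
  · intro p hp
    obtain ⟨ha33, ha33M, hRed0, hndlb, hndub, hrr2⟩ := point_facts m c₀ M hm hc₀ hM p hp
    have hδnd : δ ≤ nd p := hndlb
    refine ⟨by linarith, by have := lt_of_lt_of_le hδ hδnd; linarith⟩
  · intro p hp
    obtain ⟨ha33, ha33M, hRed0, hndlb', hndub', hrr2⟩ := point_facts m c₀ M hm hc₀ hM p hp
    have hndlb : δ ≤ nd p := hndlb'
    have hndC₁ : nd p ≤ C₁ := hndub'
    have hndub : nd p ≤ B := by linarith
    have hndpos : 0 < nd p := lt_of_lt_of_le hδ hndlb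
    have hnr : 0 < nd p + Red p := by linarith
    have hn2 : nd p ^ 2 = Red p ^ 2 + Ib p ^ 2 := Real.sq_sqrt (by positivity)
    have hx2 : xf p ^ 2 = (nd p + Red p) / 2 := Real.sq_sqrt (by linarith)
    have hxpos : 0 < xf p := Real.sqrt_pos.mpr (by linarith)
    have hxy : 2 * xf p * yf p = Ib p := by
      have h : yf p = Ib p / (2 * xf p) := rfl
      rw [h]; field_simp
    have hx2y2 : xf p ^ 2 - yf p ^ 2 = Red p := by
      have h : yf p = Ib p / (2 * xf p) := rfl
      rw [h]
      field_simp
      linear_combination (4 * xf p ^ 2 + 2 * nd p - 2 * Red p) * hx2 + hn2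
    have hxyn : xf p ^ 2 + yf p ^ 2 = nd p := by linarith
    have hnsqmu : Complex.normSq (mu p) = nd p := by
      have e : Complex.normSq (mu p) = xf p ^ 2 + yf p ^ 2 := by
        rw [Complex.normSq_apply]
        simp [MicroSym.mu]
        ring
      rw [e]; exact hxyn
    have hmu2 : mu p ^ 2 = ((Red p : ℝ) : ℂ) + ((Ib p : ℝ) : ℂ) * Complex.I := by
      have h1 : xf p * xf p - yf p * yf p = Red p := by
        have := hx2y2; rw [pow_two, pow_two] at this; linarith
      have h2 : xf p * yf p + yf p * xf p = Ib p := by linarith [hxy]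
      apply Complex.ext <;>
        simp [MicroSym.mu, pow_two, Complex.mul_re, Complex.mul_im, Complex.add_re,
          Complex.add_im] <;> linarith [h1, h2]
    have hA10 : calA p 1 0 = mu p ^ 2 - (((rr p : ℝ) : ℂ) * Complex.I) ^ 2 := by
      rw [calA10 p, hmu2]
      have hRe : ((Red p : ℝ) : ℂ) = ((Rb p : ℝ) : ℂ) - ((rr p : ℝ) : ℂ) ^ 2 := by
        have h : Red p = Rb p - rr p ^ 2 := rfl
        rw [h]; push_cast; ring
      rw [hRe]
      linear_combination ((rr p : ℝ) : ℂ) ^ 2 * Complex.I_sq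
    have hcmx : cm ≤ xf p := by
      rw [hcmdef]
      exact Real.sqrt_le_sqrt (by linarith)
    refine ⟨herm β p, ?_, ?_⟩
    · intro X
      rw [sum1_eq β p X hA10, Fin.sum_univ_two]
      set za := va p * X 0 + X 1 with hzadef
      set zb := vb p * X 0 - X 1 with hzbdef
      have hn1 : 0 ≤ Complex.normSq za := Complex.normSq_nonneg _
      have hn2' : 0 ≤ Complex.normSq zb := Complex.normSq_nonneg _
      have hq0 : 0 ≤ Complex.normSq (X 0) := Complex.normSq_nonneg _
      have hq1 : 0 ≤ Complex.normSq (X 1) := Complex.normSq_nonneg _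
      have hre : ((mu p - ((rr p : ℝ) : ℂ) * Complex.I) * (za * starRingEnd ℂ za)
          + ((β : ℝ) : ℂ) * (mu p + ((rr p : ℝ) : ℂ) * Complex.I)
            * (zb * starRingEnd ℂ zb)).re
          = xf p * Complex.normSq za + β * (xf p * Complex.normSq zb) := by
        rw [Complex.mul_conj, Complex.mul_conj]
        simp [MicroSym.mu, Complex.add_re, Complex.sub_re, Complex.mul_re, Complex.add_im,
          Complex.sub_im, Complex.mul_im]
        ring
      rw [hre]
      have hzsum : za + zb = 2 * mu p * X 0 := by
        rw [hzadef, hzbdef, MicroSym.va, MicroSym.vb]; ring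
      have h4 : Complex.normSq (2 : ℂ) = 4 := by
        rw [Complex.normSq_apply]; norm_num
      have hq0eq : Complex.normSq (za + zb) = 4 * (nd p * Complex.normSq (X 0)) := by
        rw [hzsum, Complex.normSq_mul, Complex.normSq_mul, hnsqmu, h4]; ring
      have f2 : 4 * (nd p * Complex.normSq (X 0))
          ≤ 2 * Complex.normSq za + 2 * Complex.normSq zb := by
        rw [← hq0eq]; exact normSq_add_le za zb
      have h2δq0 : 2 * δ * Complex.normSq (X 0) ≤ Complex.normSq za + Complex.normSq zb := by
        have h5 := mul_le_mul_of_nonneg_right hndlb hq0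
        linarith
      have hva : Complex.normSq (va p) ≤ C₃ := by
        have e : Complex.normSq (va p) = xf p ^ 2 + (yf p + rr p) ^ 2 := by
          rw [Complex.normSq_apply]
          simp [MicroSym.va, MicroSym.mu]
          ring
        have h5 : (yf p + rr p) ^ 2 ≤ 2 * yf p ^ 2 + 2 * rr p ^ 2 := by
          linarith [sq_nonneg (yf p - rr p)]
        rw [e, hC₃def]
        have h6 : rr p ^ 2 ≤ 4 * (M / m) ^ 2 := hrr2
        have h7 : 0 ≤ xf p ^ 2 := sq_nonneg _
        linarith [hxyn, hndub]
      have f3 : Complex.normSq (X 1)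
          ≤ 2 * Complex.normSq za + 2 * (C₃ * Complex.normSq (X 0)) := by
        have hX1 : X 1 = za + (-(va p * X 0)) := by rw [hzadef]; ring
        have h5 : Complex.normSq (X 1)
            ≤ 2 * Complex.normSq za + 2 * Complex.normSq (va p * X 0) := by
          calc Complex.normSq (X 1) = Complex.normSq (za + (-(va p * X 0))) := by rw [← hX1]
            _ ≤ 2 * Complex.normSq za + 2 * Complex.normSq (-(va p * X 0)) :=
                normSq_add_le _ _
            _ = 2 * Complex.normSq za + 2 * Complex.normSq (va p * X 0) := by
                rw [Complex.normSq_neg]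
        have h6 : Complex.normSq (va p * X 0) ≤ C₃ * Complex.normSq (X 0) := by
          rw [Complex.normSq_mul]
          exact mul_le_mul_of_nonneg_right hva hq0
        linarith
      have hb : 2 * δ * (Complex.normSq (X 0) + Complex.normSq (X 1))
          ≤ E * (Complex.normSq za + Complex.normSq zb) := by
        have h6 := mul_le_mul_of_nonneg_left f3 (by linarith : (0:ℝ) ≤ 2 * δ)
        have h7 := mul_le_mul_of_nonneg_left h2δq0 (by linarith : (0:ℝ) ≤ 2 * C₃)
        have h8 : 0 ≤ δ * Complex.normSq zb := mul_nonneg hδ.le hn2'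
        have h9 : 0 ≤ δ * Complex.normSq za := mul_nonneg hδ.le hn1
        rw [hEdef]
        linarith [h6, h7, h8, h9, h2δq0]
      have hκ1 : κ ≤ cm * β * (2 * δ) / E := by
        rw [hκdef]
        apply (div_le_div_iff_of_pos_right hE).mpr
        exact mul_le_mul_of_nonneg_right
          (mul_le_mul_of_nonneg_right (min_le_left cm 1) hβpos.le) (by linarith)
      have hch := chain0 hE (mul_pos hcm hβpos).le hκ1 hb (add_nonneg hq0 hq1)
      have hst := step1 hcmx hcm hβpos hβ1 hn1 hn2'
      linarith
    · intro X
      rw [sum2_eq β p X, Fin.sum_univ_two]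
      set za := va p * X 0 + X 1 with hzadef
      set zb := vb p * X 0 - X 1 with hzbdef
      have hn1 : 0 ≤ Complex.normSq za := Complex.normSq_nonneg _
      have hn2' : 0 ≤ Complex.normSq zb := Complex.normSq_nonneg _
      have hq0 : 0 ≤ Complex.normSq (X 0) := Complex.normSq_nonneg _
      have hq1 : 0 ≤ Complex.normSq (X 1) := Complex.normSq_nonneg _
      have hre : ((za * starRingEnd ℂ za)
          - ((β : ℝ) : ℂ) * (zb * starRingEnd ℂ zb)).re
          = Complex.normSq za - β * Complex.normSq zb := by
        rw [Complex.mul_conj, Complex.mul_conj]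
        simp
      rw [hre]
      have hzsum : za + zb = 2 * mu p * X 0 := by
        rw [hzadef, hzbdef, MicroSym.va, MicroSym.vb]; ring
      have h4 : Complex.normSq (2 : ℂ) = 4 := by
        rw [Complex.normSq_apply]; norm_num
      have hq0eq : Complex.normSq (za + zb) = 4 * (nd p * Complex.normSq (X 0)) := by
        rw [hzsum, Complex.normSq_mul, Complex.normSq_mul, hnsqmu, h4]; ring
      have f2 : 4 * (nd p * Complex.normSq (X 0))
          ≤ 2 * Complex.normSq za + 2 * Complex.normSq zb := by
        rw [← hq0eq]; exact normSq_add_le za zb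
      have h2δq0 : 2 * δ * Complex.normSq (X 0) ≤ Complex.normSq za + Complex.normSq zb := by
        have h5 := mul_le_mul_of_nonneg_right hndlb hq0
        linarith
      have f5 : Complex.normSq zb / 2 - Complex.normSq za ≤ 4 * (B * Complex.normSq (X 0)) := by
        have h5 := normSq_lower za zb
        have h6 := mul_le_mul_of_nonneg_right hndub hq0
        rw [hq0eq] at h5
        exact le_trans h5 (mul_le_mul_of_nonneg_left h6 (by norm_num : (0:ℝ) ≤ 4))
      have hva : Complex.normSq (va p) ≤ C₃ := by
        have e : Complex.normSq (va p) = xf p ^ 2 + (yf p + rr p) ^ 2 := by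
          rw [Complex.normSq_apply]
          simp [MicroSym.va, MicroSym.mu]
          ring
        have h5 : (yf p + rr p) ^ 2 ≤ 2 * yf p ^ 2 + 2 * rr p ^ 2 := by
          linarith [sq_nonneg (yf p - rr p)]
        rw [e, hC₃def]
        have h6 : rr p ^ 2 ≤ 4 * (M / m) ^ 2 := hrr2
        have h7 : 0 ≤ xf p ^ 2 := sq_nonneg _
        linarith [hxyn, hndub]
      have f3 : Complex.normSq (X 1)
          ≤ 2 * Complex.normSq za + 2 * (C₃ * Complex.normSq (X 0)) := by
        have hX1 : X 1 = za + (-(va p * X 0)) := by rw [hzadef]; ring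
        have h5 : Complex.normSq (X 1)
            ≤ 2 * Complex.normSq za + 2 * Complex.normSq (va p * X 0) := by
          calc Complex.normSq (X 1) = Complex.normSq (za + (-(va p * X 0))) := by rw [← hX1]
            _ ≤ 2 * Complex.normSq za + 2 * Complex.normSq (-(va p * X 0)) :=
                normSq_add_le _ _
            _ = 2 * Complex.normSq za + 2 * Complex.normSq (va p * X 0) := by
                rw [Complex.normSq_neg]
        have h6 : Complex.normSq (va p * X 0) ≤ C₃ * Complex.normSq (X 0) := by
          rw [Complex.normSq_mul]
          exact mul_le_mul_of_nonneg_right hva hq0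
        linarith
      have hb : 2 * δ * (Complex.normSq (X 0) + Complex.normSq (X 1))
          ≤ E * (Complex.normSq za + Complex.normSq zb) := by
        have h6 := mul_le_mul_of_nonneg_left f3 (by linarith : (0:ℝ) ≤ 2 * δ)
        have h7 := mul_le_mul_of_nonneg_left h2δq0 (by linarith : (0:ℝ) ≤ 2 * C₃)
        have h8 : 0 ≤ δ * Complex.normSq zb := mul_nonneg hδ.le hn2'
        have h9 : 0 ≤ δ * Complex.normSq za := mul_nonneg hδ.le hn1
        rw [hEdef]
        linarith [h6, h7, h8, h9, h2δq0]
      have hκ2 : κ ≤ β * (2 * δ) / E := by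
        rw [hκdef]
        apply (div_le_div_iff_of_pos_right hE).mpr
        have h5 := mul_le_mul_of_nonneg_right
          (mul_le_mul_of_nonneg_right (min_le_right cm 1) hβpos.le) (by linarith : (0:ℝ) ≤ 2 * δ)
        linarith [h5]
      have hch := chain0 hE hβpos.le hκ2 hb (add_nonneg hq0 hq1)
      have hst := step2 hB1 hβ16 hβpos f5 hn1 hn2' hq0
      linarith
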